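/- Let m ≥ 1 and C_Pert > 0. There exist constants C_rad > 0 (depending only on m) and ε' > 0 (depending on m and C_Pert) such that for every 0 < ε ≤ ε' and every curve V : [−ε, ε] → ℝ^m of the form V(h) = (h, h²/2, …, h^m/m!) + Pert(h), with Pert continuous, Pert(0) = 0, and ‖Pert(h)‖ ≤ C_Pert |h|^{m+1} for all |h| ≤ ε, the convex hull of the set {V(h) : h ∈ [−ε, ε]} contains a closed ball of radius C_rad ε^m in ℝ^m. -/

import Mathlib

open Set

/-- The moment-type curve `h ↦ (h, h²/2, …, hᵐ/m!)` in `ℝᵐ`. -/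
noncomputable def momentCurve (m : ℕ) (h : ℝ) : EuclideanSpace ℝ (Fin m) :=
  (WithLp.equiv 2 (Fin m → ℝ)).symm
    (fun n => h ^ ((n : ℕ) + 1) / (Nat.factorial ((n : ℕ) + 1) : ℝ))


lemma momentCurve_apply (m : ℕ) (h : ℝ) (n : Fin m) :
    momentCurve m h n = h ^ ((n : ℕ) + 1) / (Nat.factorial ((n : ℕ) + 1) : ℝ) := rfl

lemma momentCurve_zero (m : ℕ) : momentCurve m 0 = 0 := by
  ext n
  simp [momentCurve_apply]

open Polynomial in
lemma momentCurve_span (m : ℕ) (hm : 1 ≤ m) :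
    Submodule.span ℝ (range fun k : Fin (m+1) => momentCurve m ((k : ℝ) / m)) = ⊤ := by
  by_contra hne
  obtain ⟨g, hg, hg0⟩ := Submodule.exists_mem_ne_zero_of_ne_bot
    (p := (Submodule.span ℝ (range fun k : Fin (m+1) => momentCurve m ((k : ℝ) / m)))ᗮ)
    (by simpa [Submodule.orthogonal_eq_bot_iff] using hne)
  have horth : ∀ k : Fin (m+1), (inner ℝ (momentCurve m ((k : ℝ) / m)) g : ℝ) = 0 := fun k =>
    (Submodule.mem_orthogonal _ g).mp hg _ (Submodule.subset_span ⟨k, rfl⟩)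
  set P : ℝ[X] := ∑ n : Fin m, C (g n / (Nat.factorial ((n:ℕ)+1) : ℝ)) * X ^ ((n:ℕ)+1) with hP
  have heval : ∀ k : Fin (m+1), P.eval ((k : ℝ) / m) = 0 := by
    intro k
    have := horth k
    simp only [PiLp.inner_apply, RCLike.inner_apply, starRingEnd_apply, star_trivial,
      momentCurve_apply] at this
    simp only [hP, eval_finset_sum, eval_mul, eval_C, eval_pow, eval_X]
    rw [← this]
    congr 1; funext n; ring
  have hdeg : P.natDegree < Fintype.card (Fin (m+1)) := by
    rw [Fintype.card_fin]
    have : P.natDegree ≤ m := by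
      apply natDegree_sum_le_of_forall_le
      intro n _
      exact (natDegree_C_mul_X_pow_le _ _).trans n.isLt
    omega
  have hinj : Function.Injective (fun k : Fin (m+1) => (k : ℝ) / m) := by
    intro a b hab
    have hm0 : (m : ℝ) ≠ 0 := Nat.cast_ne_zero.mpr (by omega)
    field_simp at hab
    exact Fin.ext (Nat.cast_injective hab)
  have hP0 : P = 0 := P.eq_zero_of_natDegree_lt_card_of_eval_eq_zero hinj heval hdeg
  apply hg0
  ext n
  have : P.coeff ((n:ℕ)+1) = g n / (Nat.factorial ((n:ℕ)+1) : ℝ) := by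
    rw [hP, finset_sum_coeff]
    rw [Finset.sum_eq_single n]
    · simp
    · intro b _ hbn
      have hne' : ((b:ℕ)+1 : ℕ) ≠ (n:ℕ)+1 := by
        simp only [ne_eq, Nat.add_right_cancel_iff]
        exact fun h => hbn (Fin.ext h)
      rw [coeff_C_mul, coeff_X_pow, if_neg (fun h => hne' h.symm), mul_zero]
    · simp
  rw [hP0] at this
  simp only [coeff_zero] at this
  have hfac : (Nat.factorial ((n:ℕ)+1) : ℝ) ≠ 0 := Nat.cast_ne_zero.mpr (Nat.factorial_ne_zero _)
  have := this.symm
  field_simp at this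
  simpa using this

lemma exists_ball (m : ℕ) (hm : 1 ≤ m) :
    ∃ (c : EuclideanSpace ℝ (Fin m)) (r : ℝ), 0 < r ∧
      Metric.closedBall c r ⊆
        convexHull ℝ (range fun k : Fin (m+1) => momentCurve m ((k : ℝ) / m)) := by
  set s : Set (EuclideanSpace ℝ (Fin m)) :=
    range fun k : Fin (m+1) => momentCurve m ((k : ℝ) / m) with hs
  have h0s : (0 : EuclideanSpace ℝ (Fin m)) ∈ s := by
    refine ⟨0, ?_⟩
    simp [momentCurve_zero]
  have hvs : vectorSpan ℝ s = ⊤ := by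
    rw [eq_top_iff, ← momentCurve_span m hm, Submodule.span_le]
    intro x hx
    have : x -ᵥ 0 ∈ vectorSpan ℝ s := vsub_mem_vectorSpan ℝ hx h0s
    simpa using this
  have haff : affineSpan ℝ s = ⊤ := by
    have hne : (affineSpan ℝ s : Set (EuclideanSpace ℝ (Fin m))).Nonempty :=
      ⟨0, mem_affineSpan ℝ h0s⟩
    rw [← AffineSubspace.direction_eq_top_iff_of_nonempty hne, direction_affineSpan]
    exact hvs
  have hint : (interior (convexHull ℝ s)).Nonempty := by
    rw [(convex_convexHull ℝ s).interior_nonempty_iff_affineSpan_eq_top,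
      affineSpan_convexHull]
    exact haff
  obtain ⟨x, hx⟩ := hint
  obtain ⟨r, hr, hball⟩ := Metric.isOpen_iff.mp isOpen_interior x hx
  exact ⟨x, r/2, by positivity,
    (Metric.closedBall_subset_ball (by linarith)).trans (hball.trans interior_subset)⟩

noncomputable def dilL (m : ℕ) (ε : ℝ) :
    EuclideanSpace ℝ (Fin m) →ₗ[ℝ] EuclideanSpace ℝ (Fin m) where
  toFun x := (WithLp.equiv 2 (Fin m → ℝ)).symm (fun n => ε ^ ((n:ℕ)+1) * x n)
  map_add' x y := by
    ext n
    simp [WithLp.equiv_symm_apply, PiLp.toLp_apply, PiLp.add_apply]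
    ring
  map_smul' c x := by
    ext n
    simp [WithLp.equiv_symm_apply, PiLp.toLp_apply, PiLp.smul_apply, smul_eq_mul]
    ring

lemma dilL_apply (m : ℕ) (ε : ℝ) (x : EuclideanSpace ℝ (Fin m)) (n : Fin m) :
    dilL m ε x n = ε ^ ((n:ℕ)+1) * x n := rfl

lemma momentCurve_scale (m : ℕ) (ε t : ℝ) :
    momentCurve m (ε * t) = dilL m ε (momentCurve m t) := by
  ext n
  simp only [momentCurve_apply, dilL_apply, mul_pow]
  ring

lemma norm_scale_le {m : ℕ} (a : Fin m → ℝ) (A : ℝ) (hA : 0 ≤ A) (h : ∀ n, |a n| ≤ A)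
    (z : EuclideanSpace ℝ (Fin m)) :
    ‖((WithLp.equiv 2 (Fin m → ℝ)).symm fun n => a n * z n)‖ ≤ A * ‖z‖ := by
  rw [EuclideanSpace.norm_eq, EuclideanSpace.norm_eq]
  have h1 : ∀ n : Fin m,
      ‖((WithLp.equiv 2 (Fin m → ℝ)).symm fun n => a n * z n) n‖ ^ 2 ≤ A^2 * ‖z n‖^2 := by
    intro n
    rw [WithLp.equiv_symm_apply, PiLp.toLp_apply]
    rw [Real.norm_eq_abs, Real.norm_eq_abs, abs_mul]
    have := h n
    have h2 : |a n| * |z n| ≤ A * |z n| := mul_le_mul_of_nonneg_right this (abs_nonneg _)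
    calc (|a n| * |z n|)^2 ≤ (A * |z n|)^2 := by
          apply pow_le_pow_left₀ (by positivity) h2
      _ = A^2 * |z n|^2 := by ring
  calc Real.sqrt (∑ n, ‖((WithLp.equiv 2 (Fin m → ℝ)).symm fun n => a n * z n) n‖ ^ 2)
      ≤ Real.sqrt (∑ n, A^2 * ‖z n‖^2) := by
        apply Real.sqrt_le_sqrt
        exact Finset.sum_le_sum (fun n _ => h1 n)
    _ = A * Real.sqrt (∑ n, ‖z n‖^2) := by
        rw [← Finset.mul_sum, Real.sqrt_mul (by positivity), Real.sqrt_sq hA]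

lemma dil_ball {m : ℕ} {ε : ℝ} (hε : 0 < ε) (hε1 : ε ≤ 1)
    (c : EuclideanSpace ℝ (Fin m)) (r : ℝ) :
    Metric.closedBall (dilL m ε c) (r * ε ^ m) ⊆ dilL m ε '' Metric.closedBall c r := by
  intro y hy
  rw [Metric.mem_closedBall, dist_eq_norm] at hy
  set x : EuclideanSpace ℝ (Fin m) :=
    (WithLp.equiv 2 (Fin m → ℝ)).symm (fun n => (ε ^ ((n:ℕ)+1))⁻¹ * y n) with hx
  have hεn : ∀ n : Fin m, ε ^ ((n:ℕ)+1) ≠ 0 := fun n => pow_ne_zero _ hε.ne'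
  refine ⟨x, ?_, ?_⟩
  · rw [Metric.mem_closedBall, dist_eq_norm]
    have hxc : x - c = (WithLp.equiv 2 (Fin m → ℝ)).symm
        (fun n => (ε ^ ((n:ℕ)+1))⁻¹ * (y - dilL m ε c) n) := by
      ext n
      simp only [WithLp.equiv_symm_apply, PiLp.toLp_apply, PiLp.sub_apply, hx, dilL_apply]
      field_simp
    rw [hxc]
    have hbound : ∀ n : Fin m, |(ε ^ ((n:ℕ)+1))⁻¹| ≤ (ε ^ m)⁻¹ := by
      intro n
      rw [abs_inv, abs_pow, abs_of_pos hε]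
      apply inv_anti₀ (by positivity)
      exact pow_le_pow_of_le_one hε.le hε1 n.isLt
    calc ‖((WithLp.equiv 2 (Fin m → ℝ)).symm
          fun n => (ε ^ ((n:ℕ)+1))⁻¹ * (y - dilL m ε c) n)‖
        ≤ (ε ^ m)⁻¹ * ‖y - dilL m ε c‖ :=
          norm_scale_le _ _ (by positivity) hbound _
      _ ≤ (ε ^ m)⁻¹ * (r * ε ^ m) := by
          apply mul_le_mul_of_nonneg_left hy (by positivity)
      _ = r := by field_simp
  · ext n
    simp only [dilL_apply, hx, WithLp.equiv_symm_apply, PiLp.toLp_apply]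
    field_simp

lemma stab {m : ℕ} (s t : Set (EuclideanSpace ℝ (Fin m))) (ht : t.Finite)
    (δ : ℝ) (hδ : 0 ≤ δ)
    (hst : ∀ x ∈ s, ∃ y ∈ t, ‖x - y‖ ≤ δ) (c : EuclideanSpace ℝ (Fin m)) (r : ℝ)
    (hball : Metric.closedBall c r ⊆ convexHull ℝ s) :
    Metric.closedBall c (r - δ) ⊆ convexHull ℝ t := by
  rcases lt_or_ge (r - δ) 0 with hr | hr
  · rw [Metric.closedBall_eq_empty.mpr hr]; exact empty_subset _
  intro x hx
  by_contra hxK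
  have hKconv : Convex ℝ (convexHull ℝ t) := convex_convexHull ℝ t
  have hKcl : IsClosed (convexHull ℝ t) := (ht.isCompact_convexHull ℝ).isClosed
  obtain ⟨f, u, hfu, hux⟩ := geometric_hahn_banach_closed_point hKconv hKcl hxK
  set g : EuclideanSpace ℝ (Fin m) :=
    (InnerProductSpace.toDual ℝ (EuclideanSpace ℝ (Fin m))).symm f with hg
  have hfg : ∀ z, f z = inner ℝ g z := fun z =>
    (InnerProductSpace.toDual_symm_apply).symm
  -- t nonempty
  have hcball : c ∈ Metric.closedBall c r :=
    Metric.mem_closedBall_self (by linarith)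
  obtain ⟨y₀, hy₀⟩ : t.Nonempty := by
    by_contra hT
    rw [not_nonempty_iff_eq_empty] at hT
    have hs : s = ∅ := by
      rw [eq_empty_iff_forall_notMem]
      intro z hz
      obtain ⟨y, hy, -⟩ := hst z hz
      simp [hT] at hy
    have := hball hcball
    simp [hs] at this
  have hg0 : g ≠ 0 := by
    intro h
    have h1 : f y₀ < u := hfu _ (subset_convexHull ℝ t hy₀)
    have h2 : f x = 0 := by rw [hfg, h]; simp
    have h3 : f y₀ = 0 := by rw [hfg, h]; simp
    linarith
  have hgnorm : (0:ℝ) < ‖g‖ := norm_pos_iff.mpr hg0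
  set w : EuclideanSpace ℝ (Fin m) := ‖g‖⁻¹ • g with hw
  have hfw : f w = ‖g‖ := by
    rw [hfg, hw, real_inner_smul_right, real_inner_self_eq_norm_sq]
    field_simp
  set y := x + δ • w with hy
  have hyball : y ∈ Metric.closedBall c r := by
    rw [Metric.mem_closedBall, dist_eq_norm] at hx ⊢
    have : y - c = (x - c) + δ • w := by rw [hy]; abel
    rw [this]
    calc ‖(x - c) + δ • w‖ ≤ ‖x - c‖ + ‖δ • w‖ := norm_add_le _ _
      _ ≤ (r - δ) + δ := by
          apply add_le_add hx
          rw [norm_smul, hw, norm_smul]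
          simp [abs_of_nonneg hδ, abs_of_pos (inv_pos.mpr hgnorm)]
          rw [inv_mul_cancel₀ hgnorm.ne']
          simp [hδ]
      _ = r := by ring
  have hyhull : y ∈ convexHull ℝ s := hball hyball
  have hhalf : convexHull ℝ s ⊆ {z | f z < u + δ * ‖g‖} := by
    apply convexHull_min
    · intro z hz
      obtain ⟨y', hy', hzy'⟩ := hst z hz
      have h1 : f y' < u := hfu _ (subset_convexHull ℝ t hy')
      have h2 : f z - f y' ≤ δ * ‖g‖ := by
        have : f z - f y' = inner ℝ g (z - y') := by rw [hfg, hfg, inner_sub_right]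
        rw [this]
        calc (inner ℝ g (z - y') : ℝ) ≤ ‖g‖ * ‖z - y'‖ := real_inner_le_norm _ _
          _ ≤ ‖g‖ * δ := mul_le_mul_of_nonneg_left hzy' (norm_nonneg _)
          _ = δ * ‖g‖ := mul_comm _ _
      simp only [mem_setOf_eq]
      linarith
    · exact convex_halfSpace_lt ⟨f.map_add, f.map_smul⟩ _
  have hylt : f y < u + δ * ‖g‖ := hhalf hyhull
  have hyeq : f y = f x + δ * ‖g‖ := by
    rw [hy, f.map_add, f.map_smul, hfw]; simp
  linarith
/-- **Proposition JJ13.** There is a constant `C_rad > 0` depending only on `m` such that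
for every `C_Pert > 0` there is `ε' > 0` (depending on `m` and `C_Pert`) such that for all
`0 < ε ≤ ε'` and every curve `V(h) = (h, h²/2, …, hᵐ/m!) + Pert(h)` on `[-ε, ε]` with
`Pert` continuous, `Pert 0 = 0`, and `‖Pert h‖ ≤ C_Pert |h|^{m+1}`, the convex hull of
`{V(h) : h ∈ [-ε, ε]}` contains a closed ball of radius `C_rad εᵐ`. -/
theorem statement11 (m : ℕ) (hm : 1 ≤ m) :
    ∃ Crad > (0:ℝ), ∀ CPert > (0:ℝ), ∃ ε' > (0:ℝ),
      ∀ ε : ℝ, 0 < ε → ε ≤ ε' →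
        ∀ Pert : ℝ → EuclideanSpace ℝ (Fin m),
          ContinuousOn Pert (Icc (-ε) ε) → Pert 0 = 0 →
          (∀ h ∈ Icc (-ε) ε, ‖Pert h‖ ≤ CPert * |h| ^ (m + 1)) →
          ∃ c, Metric.closedBall c (Crad * ε ^ m) ⊆
            convexHull ℝ ((fun h => momentCurve m h + Pert h) '' Icc (-ε) ε) := by
  obtain ⟨c₀, r₀, hr₀, hball₀⟩ := exists_ball m hm
  refine ⟨r₀ / 2, by positivity, ?_⟩
  intro CPert hCP
  refine ⟨min 1 (r₀ / (2 * CPert)), by positivity, ?_⟩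
  intro ε hε hεle Pert hPcont hP0 hPbound
  have hε1 : ε ≤ 1 := hεle.trans (min_le_left _ _)
  have hεr : ε ≤ r₀ / (2 * CPert) := hεle.trans (min_le_right _ _)
  -- the sample points
  set pt : Fin (m+1) → ℝ := fun k => ε * ((k : ℝ) / m) with hpt
  have hptmem : ∀ k, pt k ∈ Icc (-ε) ε := by
    intro k
    have hm0 : (0:ℝ) < m := by exact_mod_cast hm
    have h1 : (0:ℝ) ≤ (k : ℝ) / m := by positivity
    have h2 : (k : ℝ) / m ≤ 1 := by
      rw [div_le_one hm0]
      have : (k : ℕ) ≤ m := by omega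
      exact_mod_cast this
    have hpk0 : 0 ≤ pt k := by rw [hpt]; positivity
    have hpk1 : pt k ≤ ε := by
      rw [hpt]
      nlinarith
    exact ⟨by linarith, hpk1⟩
  set s : Set (EuclideanSpace ℝ (Fin m)) := range fun k : Fin (m+1) => momentCurve m (pt k)
  set t : Set (EuclideanSpace ℝ (Fin m)) :=
    range fun k : Fin (m+1) => momentCurve m (pt k) + Pert (pt k) with hts
  set δ : ℝ := CPert * ε ^ (m+1) with hδdef
  have hδ0 : 0 ≤ δ := by positivity
  -- ball in convexHull s
  have hs_ball : Metric.closedBall (dilL m ε c₀) (r₀ * ε ^ m) ⊆ convexHull ℝ s := by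
    have hseq : s = dilL m ε '' (range fun k : Fin (m+1) => momentCurve m ((k : ℝ) / m)) := by
      rw [← range_comp]
      exact congrArg Set.range (funext fun k => momentCurve_scale m ε _)
    calc Metric.closedBall (dilL m ε c₀) (r₀ * ε ^ m)
        ⊆ dilL m ε '' Metric.closedBall c₀ r₀ := dil_ball hε hε1 c₀ r₀
      _ ⊆ dilL m ε '' convexHull ℝ (range fun k : Fin (m+1) => momentCurve m ((k : ℝ) / m)) :=
          image_mono hball₀
      _ = convexHull ℝ s := by rw [hseq, (dilL m ε).image_convexHull]
  -- perturbed points are close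
  have hst : ∀ x ∈ s, ∃ y ∈ t, ‖x - y‖ ≤ δ := by
    rintro x ⟨k, rfl⟩
    refine ⟨momentCurve m (pt k) + Pert (pt k), ⟨k, rfl⟩, ?_⟩
    have : momentCurve m (pt k) - (momentCurve m (pt k) + Pert (pt k)) = -(Pert (pt k)) := by
      abel
    rw [this, norm_neg]
    have h1 := hPbound (pt k) (hptmem k)
    have h2 : |pt k| ≤ ε := abs_le.mpr ⟨(hptmem k).1, (hptmem k).2⟩
    have h3 : |pt k| ^ (m+1) ≤ ε ^ (m+1) := pow_le_pow_left₀ (abs_nonneg _) h2 _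
    calc ‖Pert (pt k)‖ ≤ CPert * |pt k| ^ (m+1) := h1
      _ ≤ CPert * ε ^ (m+1) := mul_le_mul_of_nonneg_left h3 hCP.le
  have hstab := stab s t (finite_range _) δ hδ0 hst (dilL m ε c₀) (r₀ * ε ^ m) hs_ball
  refine ⟨dilL m ε c₀, ?_⟩
  have hsub : t ⊆ (fun h => momentCurve m h + Pert h) '' Icc (-ε) ε := by
    rintro y ⟨k, rfl⟩
    exact ⟨pt k, hptmem k, rfl⟩
  refine subset_trans ?_ ((hstab.trans (convexHull_mono hsub)))
  apply Metric.closedBall_subset_closedBall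
  have hεm : (0:ℝ) < ε ^ m := by positivity
  have : CPert * ε ≤ r₀ / 2 := by
    rw [le_div_iff₀ (by positivity)] at hεr
    nlinarith
  have hδle : δ ≤ r₀ / 2 * ε ^ m := by
    rw [hδdef, pow_succ]
    nlinarith
  linarith
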